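/- Let m ∈ ℕ, let X be a compact Hausdorff space, and let p be a projection in M_N(C(X)) such that e₁₁ ⋠ p^{⊕8m}, i.e., there is no v ∈ M_{8mN}(C(X)) with v*v = e₁₁ and vv* ≤ p^{⊕8m}. Let q = e₁₁ ⊕ p ∈ M_{N+1}(C(X)) and let A = her(q) = q·M_{N+1}(C(X))·q, a unital C*-algebra with unit q. Then A fails property C_m: there do not exist x₁,…,x_m, a₁,…,a_m, b₁,…,b_m, y₁,…,y_m ∈ A such that q = Σ_{i=1}^m xᵢ(aᵢbᵢ − bᵢaᵢ)yᵢ. -/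

import Mathlib

open Matrix ComplexOrder

section Aux

variable {N m : ℕ} {X : Type*}

/-- The eight "right factor" matrices occurring in the expansion of
`e₁₁ x (ab-ba) y e₁₁` along the first occurrence of `p'`. -/
noncomputable def Rmat (a b y : Fin m → X → Matrix (Unit ⊕ Fin N) (Unit ⊕ Fin N) ℂ) :
    Fin 8 → Fin m → X → Matrix (Unit ⊕ Fin N) (Unit ⊕ Fin N) ℂ :=
  fun s i t => ![a i t * (b i t * y i t), b i t * y i t, y i t,
    b i t * (a i t * y i t), a i t * y i t, y i t, 0, 0] s

/-- Theematching "left factor" rows. -/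
noncomputable def Lrow (x a b : Fin m → X → Matrix (Unit ⊕ Fin N) (Unit ⊕ Fin N) ℂ) :
    Fin 8 → Fin m → X → Fin N → ℂ :=
  fun s i t => ![(fun k => x i t (Sum.inl ()) (Sum.inr k)),
    x i t (Sum.inl ()) (Sum.inl ()) • (fun k => a i t (Sum.inl ()) (Sum.inr k)),
    (x i t (Sum.inl ()) (Sum.inl ()) * a i t (Sum.inl ()) (Sum.inl ())) •
      (fun k => b i t (Sum.inl ()) (Sum.inr k)),
    -(fun k => x i t (Sum.inl ()) (Sum.inr k)),
    -(x i t (Sum.inl ()) (Sum.inl ()) • (fun k => b i t (Sum.inl ()) (Sum.inr k))),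
    -((x i t (Sum.inl ()) (Sum.inl ()) * b i t (Sum.inl ()) (Sum.inl ())) •
      (fun k => a i t (Sum.inl ()) (Sum.inr k))),
    0, 0] s

lemma hat_mul (M₁ M₂ : Matrix (Unit ⊕ Fin N) (Unit ⊕ Fin N) ℂ) :
    (M₁ * M₂) (Sum.inl ()) (Sum.inl ()) =
      M₁ (Sum.inl ()) (Sum.inl ()) * M₂ (Sum.inl ()) (Sum.inl ()) +
      (fun k => M₁ (Sum.inl ()) (Sum.inr k)) ⬝ᵥ (fun k => M₂ (Sum.inr k) (Sum.inl ())) := by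
  simp [Matrix.mul_apply, dotProduct, Fintype.sum_sum_type]

lemma expand6 (x a b y : Matrix (Unit ⊕ Fin N) (Unit ⊕ Fin N) ℂ) :
    (x * (a * b - b * a) * y) (Sum.inl ()) (Sum.inl ()) =
      ((fun k => x (Sum.inl ()) (Sum.inr k)) ⬝ᵥ (fun k => (a * (b * y)) (Sum.inr k) (Sum.inl ())))
    + x (Sum.inl ()) (Sum.inl ()) *
        ((fun k => a (Sum.inl ()) (Sum.inr k)) ⬝ᵥ (fun k => (b * y) (Sum.inr k) (Sum.inl ())))
    + x (Sum.inl ()) (Sum.inl ()) * a (Sum.inl ()) (Sum.inl ()) *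
        ((fun k => b (Sum.inl ()) (Sum.inr k)) ⬝ᵥ (fun k => y (Sum.inr k) (Sum.inl ())))
    - ((fun k => x (Sum.inl ()) (Sum.inr k)) ⬝ᵥ (fun k => (b * (a * y)) (Sum.inr k) (Sum.inl ())))
    - x (Sum.inl ()) (Sum.inl ()) *
        ((fun k => b (Sum.inl ()) (Sum.inr k)) ⬝ᵥ (fun k => (a * y) (Sum.inr k) (Sum.inl ())))
    - x (Sum.inl ()) (Sum.inl ()) * b (Sum.inl ()) (Sum.inl ()) *
        ((fun k => a (Sum.inl ()) (Sum.inr k)) ⬝ᵥ (fun k => y (Sum.inr k) (Sum.inl ()))) := by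
  have h : x * (a * b - b * a) * y = x * (a * (b * y)) - x * (b * (a * y)) := by
    noncomm_ring
  rw [h, Matrix.sub_apply, hat_mul x (a * (b * y)), hat_mul x (b * (a * y)),
    hat_mul a (b * y), hat_mul b (a * y), hat_mul b y, hat_mul a y]
  ring

lemma sum8 (x a b y : Fin m → X → Matrix (Unit ⊕ Fin N) (Unit ⊕ Fin N) ℂ) (i : Fin m) (t : X) :
    ∑ s : Fin 8, Lrow x a b s i t ⬝ᵥ (fun k => Rmat a b y s i t (Sum.inr k) (Sum.inl ()))
      = (x i t * (a i t * b i t - b i t * a i t) * y i t) (Sum.inl ()) (Sum.inl ()) := by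
  rw [expand6]
  simp only [Lrow, Rmat, Fin.sum_univ_succ, Matrix.cons_val_zero, Matrix.cons_val_succ,
    Finset.univ_eq_empty, Finset.sum_empty, smul_dotProduct, neg_dotProduct, zero_dotProduct,
    smul_eq_mul]
  ring

lemma col_inv (P : Matrix (Fin N) (Fin N) ℂ) (z : Matrix (Unit ⊕ Fin N) (Unit ⊕ Fin N) ℂ)
    (hz : fromBlocks 1 0 0 P * z = z) :
    P *ᵥ (fun k => z (Sum.inr k) (Sum.inl ())) = fun k => z (Sum.inr k) (Sum.inl ()) := by
  funext k
  conv_rhs => rw [← hz]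
  simp [Matrix.mul_apply, mulVec, dotProduct, Fintype.sum_sum_type, fromBlocks]

variable {ι κ' : Type*} [Fintype ι] [Fintype κ']

lemma vmv_mul_vmv (a : ι → ℂ) (b c : κ' → ℂ) (d : ι → ℂ) :
    vecMulVec a b * vecMulVec c d = (b ⬝ᵥ c) • vecMulVec a d := by
  ext i j
  simp only [Matrix.mul_apply, vecMulVec_apply, dotProduct, Matrix.smul_apply, smul_eq_mul,
    Finset.sum_mul, Finset.mul_sum]
  exact Finset.sum_congr rfl fun k _ => by ring

omit [Fintype κ'] in
lemma mul_vmv (P : Matrix ι ι ℂ) (a : ι → ℂ) (b : κ' → ℂ) :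
    P * vecMulVec a b = vecMulVec (P *ᵥ a) b := by
  ext i j
  simp [Matrix.mul_apply, vecMulVec_apply, mulVec, dotProduct, Finset.sum_mul, mul_assoc]

omit [Fintype κ'] in
lemma vmv_mul (P : Matrix ι ι ℂ) (a : κ' → ℂ) (b : ι → ℂ) :
    vecMulVec a b * P = vecMulVec a (b ᵥ* P) := by
  ext i j
  simp [Matrix.mul_apply, vecMulVec_apply, vecMul, dotProduct, Finset.mul_sum, mul_assoc]

omit [Fintype ι] [Fintype κ'] in
lemma vmv_conjT (a : ι → ℂ) (b : κ' → ℂ) :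
    (vecMulVec a b)ᴴ = vecMulVec (star b) (star a) := by
  ext i j
  simp [vecMulVec_apply, conjTranspose_apply, mul_comm]

lemma star_single_one [DecidableEq ι] (i : ι) :
    (star (Pi.single i (1:ℂ)) : ι → ℂ) = Pi.single i 1 := by
  funext j; rcases eq_or_ne j i with h | h <;> simp [Pi.single_apply, h]

end Aux

/-- Let `p` be a projection in `M_N(C(X))` (for `X` compact Hausdorff)
such that `e₁₁ ⋠ p^{⊕8m}`.  Let `q = e₁₁ ⊕ p ∈ M_{N+1}(C(X))` (realized with index type
`Unit ⊕ Fin N`) and let `A = her(q) = q·M_{N+1}(C(X))·q`, a unital C*-algebra with unit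
`q`.  Then `A` fails property `C_m`: the unit `q` is not a sum of `m` terms `xᵢ[aᵢ,bᵢ]yᵢ`
with all entries in `A`. -/
theorem stmt_9 (m : ℕ) (hm : 0 < m) (N : ℕ) (hN : 0 < N)
    (X : Type*) [TopologicalSpace X] [CompactSpace X] [T2Space X]
    (p : X → Matrix (Fin N) (Fin N) ℂ) (hp : Continuous p)
    (hproj : ∀ t, p t * p t = p t ∧ (p t)ᴴ = p t)
    (hsub : ¬ ∃ v : X → Matrix (Fin N × Fin (8 * m)) (Fin N × Fin (8 * m)) ℂ,
      Continuous v ∧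
      (∀ t, (v t)ᴴ * v t =
        Matrix.single (⟨0, hN⟩, ⟨0, by omega⟩) (⟨0, hN⟩, ⟨0, by omega⟩) 1) ∧
      (∀ t, (Matrix.blockDiagonal (fun _ : Fin (8 * m) => p t) - v t * (v t)ᴴ).PosSemidef)) :
    ¬ ∃ x a b y : Fin m → (X → Matrix (Unit ⊕ Fin N) (Unit ⊕ Fin N) ℂ),
      (∀ i, Continuous (x i) ∧ Continuous (a i) ∧ Continuous (b i) ∧ Continuous (y i)) ∧
      (∀ i t,
        (Matrix.fromBlocks 1 0 0 (p t)) * x i t * (Matrix.fromBlocks 1 0 0 (p t)) = x i t ∧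
        (Matrix.fromBlocks 1 0 0 (p t)) * a i t * (Matrix.fromBlocks 1 0 0 (p t)) = a i t ∧
        (Matrix.fromBlocks 1 0 0 (p t)) * b i t * (Matrix.fromBlocks 1 0 0 (p t)) = b i t ∧
        (Matrix.fromBlocks 1 0 0 (p t)) * y i t * (Matrix.fromBlocks 1 0 0 (p t)) = y i t) ∧
      (∀ t, (Matrix.fromBlocks 1 0 0 (p t) : Matrix (Unit ⊕ Fin N) (Unit ⊕ Fin N) ℂ) =
        ∑ i, x i t * (a i t * b i t - b i t * a i t) * y i t) := by
  
  rintro ⟨x, a, b, y, hc, hcor, hsum⟩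
  -- q is an idempotent
  have hQ : ∀ t, (fromBlocks 1 0 0 (p t) : Matrix (Unit ⊕ Fin N) (Unit ⊕ Fin N) ℂ) *
      fromBlocks 1 0 0 (p t) = fromBlocks 1 0 0 (p t) := by
    intro t
    rw [Matrix.fromBlocks_multiply]
    simp [(hproj t).1]
  -- left invariance
  have hinv_left : ∀ (z : Matrix (Unit ⊕ Fin N) (Unit ⊕ Fin N) ℂ) (t : X),
      fromBlocks 1 0 0 (p t) * z * fromBlocks 1 0 0 (p t) = z →
      fromBlocks 1 0 0 (p t) * z = z := by
    intro z t h
    conv_lhs => rw [← h]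
    simp only [← Matrix.mul_assoc, hQ t]
    exact h
  have hRmat_inv : ∀ (i : Fin m) (t : X) (s : Fin 8),
      fromBlocks 1 0 0 (p t) * Rmat a b y s i t = Rmat a b y s i t := by
    intro i t
    have ha' := hinv_left (a i t) t (hcor i t).2.1
    have hb' := hinv_left (b i t) t (hcor i t).2.2.1
    have hy' := hinv_left (y i t) t (hcor i t).2.2.2
    simp only [Rmat, Fin.forall_fin_succ, Matrix.cons_val_zero, Matrix.cons_val_succ]
    refine ⟨?_, ?_, hy', ?_, ?_, hy', ?_, ?_, ?_⟩
    · rw [← Matrix.mul_assoc, ha']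
    · rw [← Matrix.mul_assoc, hb']
    · rw [← Matrix.mul_assoc, hb']
    · rw [← Matrix.mul_assoc, ha']
    · exact Matrix.mul_zero _
    · exact Matrix.mul_zero _
    · intro s; exact s.elim0
  -- the key scalar identity
  have key : ∀ t, ∑ i : Fin m, ∑ s : Fin 8,
      Lrow x a b s i t ⬝ᵥ (fun k => Rmat a b y s i t (Sum.inr k) (Sum.inl ())) = 1 := by
    intro t
    have h2 : ∑ i : Fin m, ∑ s : Fin 8,
        Lrow x a b s i t ⬝ᵥ (fun k => Rmat a b y s i t (Sum.inr k) (Sum.inl ()))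
        = ∑ i : Fin m,
            (x i t * (a i t * b i t - b i t * a i t) * y i t) (Sum.inl ()) (Sum.inl ()) :=
      Finset.sum_congr rfl fun i _ => sum8 x a b y i t
    rw [h2, ← Matrix.sum_apply, ← hsum t]
    simp [Matrix.fromBlocks]
  -- the column vector w
  set w : X → Fin N × Fin (8 * m) → ℂ := fun t z =>
    Rmat a b y ((finProdFinEquiv.symm z.2).1) ((finProdFinEquiv.symm z.2).2) t
      (Sum.inr z.1) (Sum.inl ()) with hwdef
  -- positivity of the norm
  have hgpos : ∀ t, 0 < ∑ z, Complex.normSq (w t z) := by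
    intro t
    rcases (Finset.sum_nonneg fun z _ => Complex.normSq_nonneg (w t z)).lt_or_eq with h | h
    · exact h
    · exfalso
      have hz : ∀ z, Complex.normSq (w t z) = 0 := by
        intro z
        have := (Finset.sum_eq_zero_iff_of_nonneg
          (fun z _ => Complex.normSq_nonneg (w t z))).mp h.symm z (Finset.mem_univ z)
        exact this
      have hw0 : ∀ z, w t z = 0 := fun z => Complex.normSq_eq_zero.mp (hz z)
      have hR0 : ∀ (s : Fin 8) (i : Fin m) (k : Fin N),
          Rmat a b y s i t (Sum.inr k) (Sum.inl ()) = 0 := by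
        intro s i k
        have := hw0 (k, finProdFinEquiv (s, i))
        simpa only [hwdef, Equiv.symm_apply_apply] using this
      have h1 := key t
      rw [Finset.sum_eq_zero] at h1
      · exact one_ne_zero h1.symm
      · intro i _
        rw [Finset.sum_eq_zero]
        intro s _
        simp [dotProduct, hR0]
  -- p-invariance of the column w
  have hPw : ∀ t, blockDiagonal (fun _ : Fin (8 * m) => p t) *ᵥ w t = w t := by
    intro t
    funext z
    obtain ⟨k, j⟩ := z
    have hcol := col_inv (p t)
      (Rmat a b y (finProdFinEquiv.symm j).1 (finProdFinEquiv.symm j).2 t)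
      (hRmat_inv _ t _)
    have hk := congrFun hcol k
    simp only [mulVec, dotProduct] at hk ⊢
    simp only [hwdef]
    rw [Fintype.sum_prod_type]
    simp only [Matrix.blockDiagonal_apply, ite_mul, zero_mul]
    simp only [Finset.sum_ite_eq, Finset.mem_univ, if_true]
    exact hk
  -- normalization
  have hu_norm : ∀ t, star ((((Real.sqrt (∑ z, Complex.normSq (w t z)))⁻¹ : ℝ) : ℂ) • w t) ⬝ᵥ
      ((((Real.sqrt (∑ z, Complex.normSq (w t z)))⁻¹ : ℝ) : ℂ) • w t) = 1 := by
    intro t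
    have hg := hgpos t
    have hsw : star (w t) ⬝ᵥ w t = ((∑ z, Complex.normSq (w t z) : ℝ) : ℂ) := by
      simp only [dotProduct, Pi.star_apply]
      push_cast
      refine Finset.sum_congr rfl fun z _ => ?_
      rw [Complex.star_def]
      exact Complex.normSq_eq_conj_mul_self.symm
    rw [star_smul, smul_dotProduct, dotProduct_smul, hsw]
    rw [Complex.star_def, Complex.conj_ofReal]
    have hre : ((Real.sqrt (∑ z, Complex.normSq (w t z)))⁻¹ : ℝ) *
        ((Real.sqrt (∑ z, Complex.normSq (w t z)))⁻¹ * (∑ z, Complex.normSq (w t z))) = 1 := by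
      rw [← mul_assoc, ← mul_inv, Real.mul_self_sqrt hg.le]
      exact inv_mul_cancel₀ hg.ne'
    rw [smul_eq_mul, smul_eq_mul, ← Complex.ofReal_mul, ← Complex.ofReal_mul, hre,
      Complex.ofReal_one]
  -- continuity facts
  have hRmat_cont : ∀ (i : Fin m) (s : Fin 8), Continuous fun t => Rmat a b y s i t := by
    intro i
    obtain ⟨hx, ha, hb, hy⟩ := hc i
    simp only [Rmat, Fin.forall_fin_succ, Matrix.cons_val_zero, Matrix.cons_val_succ]
    exact ⟨ha.matrix_mul (hb.matrix_mul hy), hb.matrix_mul hy, hy,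
      hb.matrix_mul (ha.matrix_mul hy), ha.matrix_mul hy, hy, continuous_const,
      continuous_const, fun s => s.elim0⟩
  have hw_cont : ∀ z, Continuous fun t => w t z := by
    intro z
    simp only [hwdef]
    exact (hRmat_cont _ _).matrix_elem _ _
  have hg_cont : Continuous fun t => ∑ z, Complex.normSq (w t z) :=
    continuous_finset_sum _ fun z _ => Complex.continuous_normSq.comp (hw_cont z)
  have hc_cont : Continuous fun t =>
      ((((Real.sqrt (∑ z, Complex.normSq (w t z)))⁻¹ : ℝ)) : ℂ) :=
    Complex.continuous_ofReal.comp ((Real.continuous_sqrt.comp hg_cont).inv₀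
      (fun t => (Real.sqrt_pos.mpr (hgpos t)).ne'))
  -- the normalized column
  set u : X → Fin N × Fin (8 * m) → ℂ := fun t =>
    ((((Real.sqrt (∑ z, Complex.normSq (w t z)))⁻¹ : ℝ)) : ℂ) • w t with hudef
  have hu_norm' : ∀ t, star (u t) ⬝ᵥ u t = 1 := hu_norm
  have hPu : ∀ t, blockDiagonal (fun _ : Fin (8 * m) => p t) *ᵥ u t = u t := by
    intro t
    simp only [hudef]
    rw [Matrix.mulVec_smul, hPw t]
  have hu_cont : ∀ z, Continuous fun t => u t z := by
    intro z
    simp only [hudef, Pi.smul_apply, smul_eq_mul]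
    exact hc_cont.mul (hw_cont z)
  have h8m : 0 < 8 * m := by omega
  refine hsub ⟨fun t => vecMulVec (u t)
    (Pi.single ((⟨0, hN⟩ : Fin N), (⟨0, h8m⟩ : Fin (8 * m))) 1), ?_, ?_, ?_⟩
  · refine continuous_matrix fun i j => ?_
    simp only [vecMulVec_apply]
    exact (hu_cont i).mul continuous_const
  · intro t
    show (vecMulVec (u t) (Pi.single ((⟨0, hN⟩ : Fin N), (⟨0, h8m⟩ : Fin (8 * m))) 1))ᴴ *
      vecMulVec (u t) (Pi.single ((⟨0, hN⟩ : Fin N), (⟨0, h8m⟩ : Fin (8 * m))) 1) = _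
    rw [vmv_conjT, star_single_one, vmv_mul_vmv, hu_norm' t, one_smul,
      Matrix.single_eq_single_vecMulVec_single]
  · intro t
    show (blockDiagonal (fun _ : Fin (8 * m) => p t) -
      vecMulVec (u t) (Pi.single ((⟨0, hN⟩ : Fin N), (⟨0, h8m⟩ : Fin (8 * m))) 1) *
      (vecMulVec (u t) (Pi.single ((⟨0, hN⟩ : Fin N), (⟨0, h8m⟩ : Fin (8 * m))) 1))ᴴ).PosSemidef
    have hvv : vecMulVec (u t) (Pi.single ((⟨0, hN⟩ : Fin N), (⟨0, h8m⟩ : Fin (8 * m))) 1) *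
        (vecMulVec (u t) (Pi.single ((⟨0, hN⟩ : Fin N), (⟨0, h8m⟩ : Fin (8 * m))) 1))ᴴ =
        vecMulVec (u t) (star (u t)) := by
      rw [vmv_conjT, star_single_one, vmv_mul_vmv]
      have hone : (Pi.single ((⟨0, hN⟩ : Fin N), (⟨0, h8m⟩ : Fin (8 * m))) (1:ℂ)) ⬝ᵥ
          (Pi.single ((⟨0, hN⟩ : Fin N), (⟨0, h8m⟩ : Fin (8 * m))) 1) = 1 := by
        rw [single_dotProduct]
        simp
      rw [hone, one_smul]
    rw [hvv]
    set P : Matrix (Fin N × Fin (8 * m)) (Fin N × Fin (8 * m)) ℂ :=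
      blockDiagonal (fun _ : Fin (8 * m) => p t) with hPdef
    set r : Matrix (Fin N × Fin (8 * m)) (Fin N × Fin (8 * m)) ℂ :=
      vecMulVec (u t) (star (u t)) with hrdef
    have hP2 : P * P = P := by
      rw [hPdef, ← Matrix.blockDiagonal_mul]
      exact congrArg _ (funext fun _ => (hproj t).1)
    have hPH : Pᴴ = P := by
      rw [hPdef, Matrix.blockDiagonal_conjTranspose]
      exact congrArg _ (funext fun _ => (hproj t).2)
    have hPr : P * r = r := by
      rw [hrdef, hPdef, mul_vmv, hPu t]
    have hrP : r * P = r := by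
      rw [hrdef, vmv_mul]
      congr 1
      conv_lhs => rw [← hPH, ← Matrix.star_mulVec, hPu t]
    have hrr : r * r = r := by
      rw [hrdef, vmv_mul_vmv, hu_norm' t, one_smul]
    have hD : (P - r) * (P - r) = P - r := by
      rw [sub_mul, mul_sub, mul_sub, hP2, hPr, hrP, hrr]
      abel
    have hDH : (P - r)ᴴ = P - r := by
      rw [Matrix.conjTranspose_sub, hPH, hrdef, vmv_conjT, star_star]
    have hfact := Matrix.posSemidef_conjTranspose_mul_self (P - r)
    rwa [hDH, hD] at hfact
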